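/- arXiv:1904.10339 — 6 statements merged into one kernel-verified Lean document; each statement's English description precedes it below -/
import Mathlib

section
/- Let n, m, k, r be positive integers, S_1,…,S_r ∈ ℝ^{n×n}, X ∈ ℝ^{n×m}, E ∈ ℝ^{m×m}. Let P ∈ ℝ^{n²×r} have ℓ-th column vec(S_ℓ), let U = [((XE^{k−1})ᵀ ⊗ I_n)P, ((XE^{k−2})ᵀ ⊗ I_n)P, …, (Xᵀ ⊗ I_n)P] ∈ ℝ^{mn×kr} and b = vec(−XE^k) ∈ ℝ^{mn}. Given coefficient vectors α_0,…,α_{k−1} ∈ ℝ^r, set A_i = Σ_{ℓ=1}^r α_i(ℓ) S_ℓ and let x ∈ ℝ^{kr} be the concatenation whose j-th block of length r (for j = 0,…,k−1, counted from the top) equals α_{k−1−j}. Then X E^k + Σ_{i=0}^{k−1} A_i X E^i = 0 if and only if U·x = b. -/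
open Matrix
open scoped Kronecker

/-- Column-stacking vectorization: `vecc C (j, i) = C i j`. -/
def vecc {n m : ℕ} (C : Matrix (Fin n) (Fin m) ℝ) : Fin m × Fin n → ℝ :=
  fun ji => C ji.2 ji.1

theorem stmt_4 (n m k r : ℕ) (hn : 0 < n) (hm : 0 < m) (hk : 0 < k) (hr : 0 < r)
    (S : Fin r → Matrix (Fin n) (Fin n) ℝ)
    (X : Matrix (Fin n) (Fin m) ℝ) (E : Matrix (Fin m) (Fin m) ℝ)
    (P : Matrix (Fin n × Fin n) (Fin r) ℝ)
    (hP : ∀ ℓ : Fin r, (fun ji => P ji ℓ) = vecc (S ℓ))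
    (U : Matrix (Fin m × Fin n) (Fin k × Fin r) ℝ)
    (hU : ∀ row col, U row col =
      (((X * E ^ (k - 1 - (col.1 : ℕ)))ᵀ ⊗ₖ (1 : Matrix (Fin n) (Fin n) ℝ)) * P) row col.2)
    (b : Fin m × Fin n → ℝ)
    (hb : b = vecc (-(X * E ^ k)))
    (α : Fin k → Fin r → ℝ)
    (A : Fin k → Matrix (Fin n) (Fin n) ℝ)
    (hA : ∀ i : Fin k, A i = ∑ ℓ : Fin r, α i ℓ • S ℓ)
    (x : Fin k × Fin r → ℝ)
    (hx : ∀ (j : Fin k) (ℓ : Fin r), x (j, ℓ) = α (Fin.rev j) ℓ) :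
    X * E ^ k + ∑ i : Fin k, A i * X * E ^ (i : ℕ) = 0 ↔ U.mulVec x = b := by
  have hterm : ∀ (j : Fin m) (i : Fin n) (c : Fin k) (ℓ : Fin r),
      U (j, i) (c, ℓ) = (S ℓ * (X * E ^ (k - 1 - (c : ℕ)))) i j := by
    intro j i c ℓ
    rw [hU]
    simp only [mul_apply, Fintype.sum_prod_type, kroneckerMap_apply, transpose_apply,
      Matrix.one_apply]
    have hPq : ∀ (q p : Fin n), P (q, p) ℓ = S ℓ p q := by
      intro q p
      have := congrFun (hP ℓ) (q, p)
      simpa [vecc] using this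
    simp [hPq, mul_ite, ite_mul, Finset.sum_ite_eq', mul_comm]
  have key : ∀ j i, U.mulVec x (j, i) = (∑ i' : Fin k, A i' * X * E ^ (i' : ℕ)) i j := by
    intro j i
    rw [mulVec, dotProduct]
    rw [Fintype.sum_prod_type]
    have step1 : ∀ c : Fin k,
        ∑ ℓ : Fin r, U (j, i) (c, ℓ) * x (c, ℓ)
          = (A (Fin.rev c) * (X * E ^ (k - 1 - (c : ℕ)))) i j := by
      intro c
      simp only [hterm, hx, hA, Matrix.sum_apply, Matrix.sum_mul, smul_mul_assoc, Matrix.smul_mul,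
        Matrix.smul_apply, smul_eq_mul]
      refine Finset.sum_congr rfl fun ℓ _ => by ring
    simp only [step1, Matrix.sum_apply]
    refine Fintype.sum_equiv Fin.revPerm _ _ fun c => ?_
    simp only [Fin.revPerm_apply]
    have h2 : k - 1 - (c : ℕ) = ((c.rev : Fin k) : ℕ) := by
      have := c.isLt
      simp only [Fin.val_rev]
      omega
    rw [h2, Matrix.mul_assoc]
  constructor
  · intro h
    funext ji
    obtain ⟨j, i⟩ := ji
    rw [key, hb]
    have := congrFun (congrFun h i) j
    simp only [Matrix.add_apply, Matrix.zero_apply] at this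
    simp [vecc]
    linarith
  · intro h
    funext i j
    have := congrFun h (j, i)
    rw [key, hb] at this
    simp [vecc] at this
    simp only [Matrix.add_apply, Matrix.zero_apply]
    linarith
end

section
/- Let n, m, k, r be positive integers, S_1,…,S_r ∈ ℝ^{n×n}, X ∈ ℝ^{n×m}, E ∈ ℝ^{m×m}. Let P ∈ ℝ^{n²×r} have ℓ-th column vec(S_ℓ), let U = [((XE^{k−1})ᵀ ⊗ I_n)P, …, (Xᵀ ⊗ I_n)P] ∈ ℝ^{mn×kr}, b = vec(−XE^k), and let U† ∈ ℝ^{kr×mn} be a Moore–Penrose pseudoinverse of U. Then there exist coefficient vectors α_0,…,α_{k−1} ∈ ℝ^r such that the matrices A_i = Σ_{ℓ=1}^r α_i(ℓ) S_ℓ satisfy X E^k + Σ_{i=0}^{k−1} A_i X E^i = 0 if and only if U(U†b) = b. -/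
open Matrix
open scoped Kronecker

theorem stmt_5 (n m k r : ℕ) (hn : 0 < n) (hm : 0 < m) (hk : 0 < k) (hr : 0 < r)
    (S : Fin r → Matrix (Fin n) (Fin n) ℝ)
    (X : Matrix (Fin n) (Fin m) ℝ) (E : Matrix (Fin m) (Fin m) ℝ)
    (P : Matrix (Fin n × Fin n) (Fin r) ℝ)
    (hP : ∀ ℓ : Fin r, (fun ji => P ji ℓ) = vecc (S ℓ))
    (U : Matrix (Fin m × Fin n) (Fin k × Fin r) ℝ)
    (hU : ∀ row col, U row col =
      (((X * E ^ (k - 1 - (col.1 : ℕ)))ᵀ ⊗ₖ (1 : Matrix (Fin n) (Fin n) ℝ)) * P) row col.2)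
    (b : Fin m × Fin n → ℝ)
    (hb : b = vecc (-(X * E ^ k)))
    (Ud : Matrix (Fin k × Fin r) (Fin m × Fin n) ℝ)
    (hd1 : U * Ud * U = U) (hd2 : Ud * U * Ud = Ud)
    (hd3 : (U * Ud)ᵀ = U * Ud) (hd4 : (Ud * U)ᵀ = Ud * U) :
    (∃ α : Fin k → Fin r → ℝ,
        X * E ^ k + ∑ i : Fin k, (∑ ℓ : Fin r, α i ℓ • S ℓ) * X * E ^ (i : ℕ) = 0) ↔
      U.mulVec (Ud.mulVec b) = b := by
  -- entry formula for U
  have hUentry : ∀ (row : Fin m × Fin n) (col : Fin k × Fin r),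
      U row col = (S col.2 * X * E ^ (k - 1 - (col.1 : ℕ))) row.2 row.1 := by
    intro row col
    rw [hU, Matrix.mul_apply]
    have hPe : ∀ ab : Fin n × Fin n, P ab col.2 = S col.2 ab.2 ab.1 := by
      intro ab
      have := congrFun (hP col.2) ab
      simpa [vecc] using this
    have hR : (S col.2 * X * E ^ (k - 1 - (col.1 : ℕ))) row.2 row.1
        = ∑ a : Fin n, S col.2 row.2 a * (X * E ^ (k - 1 - (col.1 : ℕ))) a row.1 := by
      rw [Matrix.mul_assoc, Matrix.mul_apply]
    rw [hR]
    simp only [hPe]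
    rw [Fintype.sum_prod_type]
    simp only [Matrix.kroneckerMap_apply, Matrix.transpose_apply, Matrix.one_apply,
      mul_ite, mul_one, mul_zero, ite_mul, zero_mul, Finset.sum_ite_eq,
      Finset.mem_univ, if_true]
    exact Finset.sum_congr rfl fun a _ => mul_comm _ _
  -- mulVec formula
  have hvec : ∀ x : Fin k × Fin r → ℝ,
      U.mulVec x = vecc (∑ p : Fin k × Fin r, x p • (S p.2 * X * E ^ (k - 1 - (p.1 : ℕ)))) := by
    intro x
    funext ji
    simp only [Matrix.mulVec, dotProduct, hUentry, vecc, Matrix.sum_apply, Matrix.smul_apply,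
      smul_eq_mul]
    exact Finset.sum_congr rfl fun p _ => mul_comm _ _
  -- vecc is injective
  have hvecc_inj : ∀ A B : Matrix (Fin n) (Fin m) ℝ, vecc A = vecc B → A = B := by
    intro A B h
    ext i j
    exact congrFun h (j, i)
  -- solvability characterization
  have hsolve : ∀ x : Fin k × Fin r → ℝ, U.mulVec x = b ↔
      X * E ^ k + ∑ p : Fin k × Fin r, x p • (S p.2 * X * E ^ (k - 1 - (p.1 : ℕ))) = 0 := by
    intro x
    rw [hvec, hb]
    constructor
    · intro h
      have h' := hvecc_inj _ _ h
      rw [h']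
      abel
    · intro h
      have h' : (∑ p : Fin k × Fin r, x p • (S p.2 * X * E ^ (k - 1 - (p.1 : ℕ))))
          = -(X * E ^ k) := by
        have := eq_neg_of_add_eq_zero_right h
        exact this
      rw [h']
  -- reindexing sum
  have hsum : ∀ α : Fin k → Fin r → ℝ,
      ∑ i : Fin k, (∑ ℓ : Fin r, α i ℓ • S ℓ) * X * E ^ (i : ℕ)
        = ∑ p : Fin k × Fin r, α p.1.rev p.2 • (S p.2 * X * E ^ (k - 1 - (p.1 : ℕ))) := by
    intro α
    rw [Fintype.sum_prod_type]
    rw [← Equiv.sum_comp (Fin.revPerm : Equiv.Perm (Fin k))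
      (fun j => ∑ ℓ : Fin r, α j.rev ℓ • (S ℓ * X * E ^ (k - 1 - (j : ℕ))))]
    refine Finset.sum_congr rfl fun i _ => ?_
    simp only [Fin.revPerm_apply, Fin.rev_rev]
    have h2 : k - 1 - ((i.rev : Fin k) : ℕ) = (i : ℕ) := by
      have := Fin.val_rev i
      have hi := i.isLt
      omega
    rw [h2, Matrix.sum_mul, Matrix.sum_mul]
    refine Finset.sum_congr rfl fun ℓ _ => ?_
    rw [Matrix.smul_mul, Matrix.smul_mul]
  have hmain : (∃ α : Fin k → Fin r → ℝ,
      X * E ^ k + ∑ i : Fin k, (∑ ℓ : Fin r, α i ℓ • S ℓ) * X * E ^ (i : ℕ) = 0) ↔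
      ∃ x : Fin k × Fin r → ℝ, U.mulVec x = b := by
    constructor
    · rintro ⟨α, hα⟩
      refine ⟨fun p => α p.1.rev p.2, (hsolve _).mpr ?_⟩
      rw [hsum α] at hα
      exact hα
    · rintro ⟨x, hx⟩
      refine ⟨fun i ℓ => x (i.rev, ℓ), ?_⟩
      rw [hsum]
      have : ∑ p : Fin k × Fin r, x (p.1.rev.rev, p.2) • (S p.2 * X * E ^ (k - 1 - (p.1 : ℕ)))
          = ∑ p : Fin k × Fin r, x p • (S p.2 * X * E ^ (k - 1 - (p.1 : ℕ))) := by
        refine Finset.sum_congr rfl fun p _ => ?_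
        rw [Fin.rev_rev]
      rw [this]
      exact (hsolve x).mp hx
  rw [hmain]
  constructor
  · rintro ⟨x, hx⟩
    conv_lhs => rw [← hx]
    rw [Matrix.mulVec_mulVec, Matrix.mulVec_mulVec, hd1]
    exact hx
  · intro h
    exact ⟨Ud.mulVec b, h⟩
end

section
/- Let n, m, k, r be positive integers, S_1,…,S_r ∈ ℝ^{n×n}, X ∈ ℝ^{n×m}, E ∈ ℝ^{m×m}, P ∈ ℝ^{n²×r} with ℓ-th column vec(S_ℓ), U = [((XE^{k−1})ᵀ ⊗ I_n)P, …, (Xᵀ ⊗ I_n)P] ∈ ℝ^{mn×kr}, b = vec(−XE^k), and let U† be a Moore–Penrose pseudoinverse of U with U(U†b) = b. Then for every y ∈ ℝ^{kr}, setting x = U†b + (I_{kr} − U†U)y, letting α_i ∈ ℝ^r be the block of x occupying positions corresponding to block index k−1−i (for i = 0,…,k−1), and A_i = Σ_{ℓ=1}^r α_i(ℓ) S_ℓ, the matrices A_0,…,A_{k−1} satisfy X E^k + Σ_{i=0}^{k−1} A_i X E^i = 0. -/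
open Matrix
open scoped Kronecker

theorem stmt_6 (n m k r : ℕ) (hn : 0 < n) (hm : 0 < m) (hk : 0 < k) (hr : 0 < r)
    (S : Fin r → Matrix (Fin n) (Fin n) ℝ)
    (X : Matrix (Fin n) (Fin m) ℝ) (E : Matrix (Fin m) (Fin m) ℝ)
    (P : Matrix (Fin n × Fin n) (Fin r) ℝ)
    (hP : ∀ ℓ : Fin r, (fun ji => P ji ℓ) = vecc (S ℓ))
    (U : Matrix (Fin m × Fin n) (Fin k × Fin r) ℝ)
    (hU : ∀ row col, U row col =
      (((X * E ^ (k - 1 - (col.1 : ℕ)))ᵀ ⊗ₖ (1 : Matrix (Fin n) (Fin n) ℝ)) * P) row col.2)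
    (b : Fin m × Fin n → ℝ)
    (hb : b = vecc (-(X * E ^ k)))
    (Ud : Matrix (Fin k × Fin r) (Fin m × Fin n) ℝ)
    (hd1 : U * Ud * U = U) (hd2 : Ud * U * Ud = Ud)
    (hd3 : (U * Ud)ᵀ = U * Ud) (hd4 : (Ud * U)ᵀ = Ud * U)
    (hsolv : U.mulVec (Ud.mulVec b) = b)
    (y : Fin k × Fin r → ℝ)
    (x : Fin k × Fin r → ℝ)
    (hx : x = Ud.mulVec b + ((1 : Matrix (Fin k × Fin r) (Fin k × Fin r) ℝ) - Ud * U).mulVec y)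
    (α : Fin k → Fin r → ℝ)
    (hα : ∀ (i : Fin k) (ℓ : Fin r), α i ℓ = x (Fin.rev i, ℓ))
    (A : Fin k → Matrix (Fin n) (Fin n) ℝ)
    (hA : ∀ i : Fin k, A i = ∑ ℓ : Fin r, α i ℓ • S ℓ) :
    X * E ^ k + ∑ i : Fin k, A i * X * E ^ (i : ℕ) = 0 := by
  -- U x = b
  have hUx : U.mulVec x = b := by
    rw [hx, Matrix.mulVec_add, hsolv, Matrix.mulVec_mulVec, Matrix.mul_sub,
      Matrix.mul_one, ← Matrix.mul_assoc, hd1, sub_self, Matrix.zero_mulVec, add_zero]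
  -- entries of U
  have hUentry : ∀ (jj : Fin m) (ii : Fin n) (p : Fin k) (ℓ : Fin r),
      U (jj, ii) (p, ℓ) = (S ℓ * (X * E ^ (k - 1 - (p : ℕ)))) ii jj := by
    intro jj ii p ℓ
    have hPe : ∀ a c : Fin n, P (a, c) ℓ = S ℓ c a := by
      intro a c
      have := congrFun (hP ℓ) (a, c)
      simpa [vecc] using this
    rw [hU (jj, ii) (p, ℓ)]
    simp only [Matrix.mul_apply, Matrix.kroneckerMap_apply, Matrix.transpose_apply,
      Matrix.one_apply]
    rw [Fintype.sum_prod_type]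
    simp only [hPe, ite_mul, one_mul, zero_mul, mul_ite, mul_one, mul_zero]
    simp [Finset.sum_ite_eq, mul_comm]
  have key : ∀ (ii : Fin n) (jj : Fin m),
      (∑ p : Fin k, (A (Fin.rev p) * X * E ^ (k - 1 - (p : ℕ))) ii jj) = b (jj, ii) := by
    intro ii jj
    rw [← hUx]
    show _ = ∑ c : Fin k × Fin r, U (jj, ii) c * x c
    rw [Fintype.sum_prod_type]
    refine Finset.sum_congr rfl fun p _ => ?_
    have : A (Fin.rev p) * X * E ^ (k - 1 - (p : ℕ))
        = ∑ ℓ : Fin r, x (p, ℓ) • (S ℓ * (X * E ^ (k - 1 - (p : ℕ)))) := by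
      rw [hA]
      simp only [Matrix.sum_mul]
      refine Finset.sum_congr rfl fun ℓ _ => ?_
      rw [hα, Fin.rev_rev]
      simp [Matrix.smul_mul, Matrix.mul_assoc]
    rw [this]
    simp only [Matrix.sum_apply, Matrix.smul_apply, smul_eq_mul]
    exact Finset.sum_congr rfl fun ℓ _ => by rw [hUentry]; ring
  -- reindex
  have key2 : (∑ i : Fin k, A i * X * E ^ (i : ℕ)) = -(X * E ^ k) := by
    ext ii jj
    have h1 : (∑ p : Fin k, (A (Fin.rev p) * X * E ^ ((Fin.rev p : Fin k) : ℕ)) ii jj)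
        = b (jj, ii) := by
      have := key ii jj
      simpa [Fin.val_rev, Nat.sub_sub, Nat.add_comm] using this
    have h2 : (∑ p : Fin k, (A (Fin.rev p) * X * E ^ ((Fin.rev p : Fin k) : ℕ)) ii jj)
        = ∑ i : Fin k, (A i * X * E ^ (i : ℕ)) ii jj :=
      Equiv.sum_comp (Fin.revPerm) (fun i => (A i * X * E ^ (i : ℕ)) ii jj)
    rw [Matrix.sum_apply, ← h2, h1, hb]
    simp [vecc]
  rw [key2]
  simp
end

section
/- Let n, m, k, r be positive integers, S_1,…,S_r ∈ ℝ^{n×n} linearly independent, X ∈ ℝ^{n×m}, E ∈ ℝ^{m×m}, P ∈ ℝ^{n²×r} with ℓ-th column vec(S_ℓ), U = [((XE^{k−1})ᵀ ⊗ I_n)P, …, (Xᵀ ⊗ I_n)P] ∈ ℝ^{mn×kr}, b = vec(−XE^k), and U† a Moore–Penrose pseudoinverse of U. Then there exists a unique tuple (A_0,…,A_{k−1}) of matrices in the span of {S_1,…,S_r} satisfying X E^k + Σ_{i=0}^{k−1} A_i X E^i = 0 if and only if U(U†b) = b and U†U = I_{kr}; in that case the unique solution is obtained from x = U†b by taking the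 j-th length-r block of x as the coefficient vector of A_{k−1−j} in the basis S_1,…,S_r. -/
open Matrix
open scoped Kronecker

/-- Auxiliary: matrices built from coefficient vectors. -/
def Am {n r : ℕ} (k : ℕ) (S : Fin r → Matrix (Fin n) (Fin n) ℝ)
    (x : Fin k × Fin r → ℝ) : Fin k → Matrix (Fin n) (Fin n) ℝ :=
  fun i => ∑ ℓ : Fin r, x (Fin.rev i, ℓ) • S ℓ

theorem stmt_8 (n m k r : ℕ) (hn : 0 < n) (hm : 0 < m) (hk : 0 < k) (hr : 0 < r)
    (S : Fin r → Matrix (Fin n) (Fin n) ℝ)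
    (X : Matrix (Fin n) (Fin m) ℝ) (E : Matrix (Fin m) (Fin m) ℝ)
    (P : Matrix (Fin n × Fin n) (Fin r) ℝ)
    (hP : ∀ ℓ : Fin r, (fun ji => P ji ℓ) = vecc (S ℓ))
    (U : Matrix (Fin m × Fin n) (Fin k × Fin r) ℝ)
    (hU : ∀ row col, U row col =
      (((X * E ^ (k - 1 - (col.1 : ℕ)))ᵀ ⊗ₖ (1 : Matrix (Fin n) (Fin n) ℝ)) * P) row col.2)
    (b : Fin m × Fin n → ℝ)
    (hb : b = vecc (-(X * E ^ k)))
    (Ud : Matrix (Fin k × Fin r) (Fin m × Fin n) ℝ)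
    (hd1 : U * Ud * U = U) (hd2 : Ud * U * Ud = Ud)
    (hd3 : (U * Ud)ᵀ = U * Ud) (hd4 : (Ud * U)ᵀ = Ud * U)
    (hS : LinearIndependent ℝ S) :
    ((∃! A : Fin k → Matrix (Fin n) (Fin n) ℝ,
        (∀ i : Fin k, A i ∈ Submodule.span ℝ (Set.range S)) ∧
          X * E ^ k + ∑ i : Fin k, A i * X * E ^ (i : ℕ) = 0) ↔
      (U.mulVec (Ud.mulVec b) = b ∧ Ud * U = 1)) ∧
    ((U.mulVec (Ud.mulVec b) = b ∧ Ud * U = 1) →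
      ∀ A : Fin k → Matrix (Fin n) (Fin n) ℝ,
        (∀ i : Fin k, A i ∈ Submodule.span ℝ (Set.range S)) ∧
          X * E ^ k + ∑ i : Fin k, A i * X * E ^ (i : ℕ) = 0 →
        ∀ i : Fin k, A i = ∑ ℓ : Fin r, (Ud.mulVec b) (Fin.rev i, ℓ) • S ℓ) := by
  classical
  have hP' : ∀ (ℓ : Fin r) (q i' : Fin n), P (q, i') ℓ = S ℓ i' q := fun ℓ q i' =>
    congrFun (hP ℓ) (q, i')
  -- entries of U
  have hUe : ∀ (j : Fin m) (i : Fin n) (p : Fin k) (ℓ : Fin r),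
      U (j, i) (p, ℓ) = (S ℓ * (X * E ^ (k - 1 - (p : ℕ)))) i j := by
    intro j i p ℓ
    rw [hU (j, i) (p, ℓ)]
    simp only [Matrix.mul_apply, Matrix.kroneckerMap_apply, Matrix.transpose_apply,
      Matrix.one_apply]
    rw [Fintype.sum_prod_type]
    simp only [hP', mul_ite, mul_one, mul_zero, ite_mul, zero_mul]
    simp only [Finset.sum_ite_eq, Finset.mem_univ, if_true]
    exact Finset.sum_congr rfl fun q _ => mul_comm _ _
  -- span membership of Am
  have hAm_span : ∀ (x : Fin k × Fin r → ℝ) (i : Fin k),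
      Am k S x i ∈ Submodule.span ℝ (Set.range S) :=
    fun x i => Submodule.sum_mem _ fun ℓ _ =>
      Submodule.smul_mem _ _ (Submodule.subset_span ⟨ℓ, rfl⟩)
  -- the vectorization identity
  have hvec : ∀ (x : Fin k × Fin r → ℝ) (j : Fin m) (i : Fin n),
      (U.mulVec x) (j, i) = (∑ p : Fin k, Am k S x p * X * E ^ (p : ℕ)) i j := by
    intro x j i
    have hR : (∑ p : Fin k, Am k S x p * X * E ^ (p : ℕ)) i j
        = ∑ p : Fin k, ∑ ℓ : Fin r, x (Fin.rev p, ℓ) * (S ℓ * (X * E ^ (p : ℕ))) i j := by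
      rw [Matrix.sum_apply]
      refine Finset.sum_congr rfl fun p _ => ?_
      show ((∑ ℓ : Fin r, x (Fin.rev p, ℓ) • S ℓ) * X * E ^ (p : ℕ)) i j = _
      rw [Matrix.sum_mul, Matrix.sum_mul, Matrix.sum_apply]
      refine Finset.sum_congr rfl fun ℓ _ => ?_
      rw [Matrix.smul_mul, Matrix.smul_mul, Matrix.smul_apply, smul_eq_mul, Matrix.mul_assoc]
    have hL : (U.mulVec x) (j, i)
        = ∑ p : Fin k, ∑ ℓ : Fin r, (S ℓ * (X * E ^ (k - 1 - (p : ℕ)))) i j * x (p, ℓ) := by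
      simp only [Matrix.mulVec, dotProduct]
      rw [Fintype.sum_prod_type]
      exact Finset.sum_congr rfl fun p _ => Finset.sum_congr rfl fun ℓ _ => by rw [hUe]
    rw [hL, hR]
    refine Fintype.sum_bijective Fin.rev Fin.rev_bijective _ _ fun p => ?_
    refine Finset.sum_congr rfl fun ℓ _ => ?_
    rw [Fin.rev_rev, Fin.val_rev, mul_comm]
    have hpk : k - ((p : ℕ) + 1) = k - 1 - (p : ℕ) := by omega
    rw [hpk]
  -- key equivalence
  have hkey : ∀ x : Fin k × Fin r → ℝ,
      U.mulVec x = b ↔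
        X * E ^ k + ∑ i : Fin k, Am k S x i * X * E ^ (i : ℕ) = 0 := by
    intro x
    constructor
    · intro h
      have h2 : ∑ p : Fin k, Am k S x p * X * E ^ (p : ℕ) = -(X * E ^ k) := by
        ext i j
        rw [← hvec x j i, h, hb]
        rfl
      rw [h2]; simp
    · intro h
      have h2 : ∑ p : Fin k, Am k S x p * X * E ^ (p : ℕ) = -(X * E ^ k) :=
        eq_neg_of_add_eq_zero_left (by rw [add_comm]; exact h)
      funext ji
      obtain ⟨j, i⟩ := ji
      rw [hvec x j i, h2, hb]
      rfl
  -- injectivity of Am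
  have hinj : ∀ x y : Fin k × Fin r → ℝ, Am k S x = Am k S y → x = y := by
    intro x y h
    funext pl
    obtain ⟨p, ℓ⟩ := pl
    have h1 : ∑ ℓ : Fin r, (x (p, ℓ) - y (p, ℓ)) • S ℓ = 0 := by
      have := congrFun h (Fin.rev p)
      simp only [Am, Fin.rev_rev] at this
      simp only [sub_smul, Finset.sum_sub_distrib, sub_eq_zero]
      exact this
    have := Fintype.linearIndependent_iff.mp hS (fun ℓ => x (p, ℓ) - y (p, ℓ)) h1 ℓ
    exact sub_eq_zero.mp this
  -- surjectivity onto span tuples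
  have hrep : ∀ A : Fin k → Matrix (Fin n) (Fin n) ℝ,
      (∀ i : Fin k, A i ∈ Submodule.span ℝ (Set.range S)) → ∃ x, Am k S x = A := by
    intro A hA
    choose c hc using fun i => (Submodule.mem_span_range_iff_exists_fun ℝ).mp (hA i)
    refine ⟨fun pl => c (Fin.rev pl.1) pl.2, ?_⟩
    funext i
    simp only [Am, Fin.rev_rev]
    exact hc i
  -- linear system equivalence with pseudoinverse conditions
  have hE2 : (∃! x : Fin k × Fin r → ℝ, U.mulVec x = b) ↔
      (U.mulVec (Ud.mulVec b) = b ∧ Ud * U = 1) := by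
    constructor
    · rintro ⟨x, hx, huniq⟩
      have h1 : U.mulVec (Ud.mulVec b) = b := by
        conv_lhs => rw [← hx]
        rw [Matrix.mulVec_mulVec, Matrix.mulVec_mulVec, hd1, hx]
      have hker : ∀ y : Fin k × Fin r → ℝ, U.mulVec y = 0 → y = 0 := by
        intro y hy
        have hxy : U.mulVec (x + y) = b := by rw [Matrix.mulVec_add, hy, add_zero, hx]
        have := huniq _ hxy
        have : x + y = x := this
        exact by
          have := congrArg (fun z => z - x) this
          simpa using this
      have h2 : Ud * U = 1 := by
        have hUDU : U * (Ud * U) = U := by rw [← Matrix.mul_assoc, hd1]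
        ext i j
        have hz : U.mulVec (fun l => (Ud * U) l j - (1 : Matrix (Fin k × Fin r) (Fin k × Fin r) ℝ) l j) = 0 := by
          funext i'
          simp only [Matrix.mulVec, dotProduct, mul_sub, Finset.sum_sub_distrib]
          have hA : ∑ l, U i' l * (Ud * U) l j = U i' j := by
            rw [← Matrix.mul_apply, hUDU]
          have hB : ∑ l, U i' l * (1 : Matrix (Fin k × Fin r) (Fin k × Fin r) ℝ) l j
              = U i' j := by
            rw [← Matrix.mul_apply, Matrix.mul_one]
          rw [hA, hB, sub_self]
          rfl
        have := congrFun (hker _ hz) i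
        simpa [sub_eq_zero] using this
      exact ⟨h1, h2⟩
    · rintro ⟨h1, h2⟩
      refine ⟨Ud.mulVec b, h1, ?_⟩
      intro y hy
      calc y = (Ud * U).mulVec y := by rw [h2, Matrix.one_mulVec]
        _ = Ud.mulVec (U.mulVec y) := (Matrix.mulVec_mulVec _ _ _).symm
        _ = Ud.mulVec b := by rw [hy]
  constructor
  · rw [← hE2]
    constructor
    · rintro ⟨A, ⟨hAspan, hAeq⟩, hAu⟩
      obtain ⟨x, hx⟩ := hrep A hAspan
      refine ⟨x, (hkey x).mpr (by rw [hx]; exact hAeq), ?_⟩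
      intro y hy
      have hyA : Am k S y = A := hAu (Am k S y) ⟨hAm_span y, (hkey y).mp hy⟩
      exact hinj y x (hyA.trans hx.symm)
    · rintro ⟨x, hx, hxu⟩
      refine ⟨Am k S x, ⟨hAm_span x, (hkey x).mp hx⟩, ?_⟩
      rintro A ⟨hAspan, hAeq⟩
      obtain ⟨y, hy⟩ := hrep A hAspan
      have hyx : y = x := hxu y ((hkey y).mpr (by rw [hy]; exact hAeq))
      rw [← hy, hyx]
  · rintro ⟨h1, h2⟩ A ⟨hAspan, hAeq⟩ i
    obtain ⟨y, hy⟩ := hrep A hAspan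
    have hyb : U.mulVec y = b := (hkey y).mpr (by rw [hy]; exact hAeq)
    have hyx : y = Ud.mulVec b := by
      calc y = (Ud * U).mulVec y := by rw [h2, Matrix.one_mulVec]
        _ = Ud.mulVec (U.mulVec y) := (Matrix.mulVec_mulVec _ _ _).symm
        _ = Ud.mulVec b := by rw [hyb]
    rw [← congrFun hy i, hyx]
    rfl
end

section
/- Let A_0,…,A_k ∈ ℝ^{n×n} with A_k invertible, with n ≥ 1, and consider the matrix over ℝ[X] given by P = Σ_{i=0}^{k} X^i • (A_i mapped entrywise into ℝ[X]). Then the polynomial det(P) ∈ ℝ[X] has degree exactly k·n, and its leading coefficient equals det(A_k). -/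
open Matrix Polynomial

theorem stmt_14 (n k : ℕ) (hn : 1 ≤ n) (A : Fin (k + 1) → Matrix (Fin n) (Fin n) ℝ)
    (hAk : Invertible (A (Fin.last k))) :
    (∑ i : Fin (k + 1), (Polynomial.X : ℝ[X]) ^ (i : ℕ) • (A i).map Polynomial.C).det.degree =
        (k * n : ℕ) ∧
      (∑ i : Fin (k + 1), (Polynomial.X : ℝ[X]) ^ (i : ℕ) • (A i).map Polynomial.C).det.leadingCoeff =
        (A (Fin.last k)).det := by
  set P : Matrix (Fin n) (Fin n) ℝ[X] :=
    ∑ i : Fin (k + 1), (Polynomial.X : ℝ[X]) ^ (i : ℕ) • (A i).map Polynomial.C with hPdef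
  have entry : ∀ i j, P i j = ∑ m : Fin (k + 1), C (A m i j) * X ^ (m : ℕ) := by
    intro i j
    simp only [hPdef, Matrix.sum_apply, Matrix.smul_apply, Matrix.map_apply, smul_eq_mul]
    exact Finset.sum_congr rfl fun m _ => mul_comm _ _
  have hdeg : ∀ i j, (P i j).natDegree ≤ k := by
    intro i j
    rw [entry]
    refine natDegree_sum_le_of_forall_le _ _ fun m _ => ?_
    refine (natDegree_C_mul_le _ _).trans ?_
    rw [natDegree_X_pow]
    exact Fin.is_le m
  have hcoeff : ∀ i j, (P i j).coeff k = A (Fin.last k) i j := by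
    intro i j
    rw [entry, finset_sum_coeff]
    rw [Finset.sum_eq_single (Fin.last k)]
    · simp [coeff_C_mul, coeff_X_pow]
    · intro m _ hm
      have hm' : (m : ℕ) ≠ k := fun h => hm (Fin.ext (by simp [h]))
      simp [coeff_C_mul, coeff_X_pow, hm'.symm]
    · simp
  have hD : (det P).coeff (k * n) = (A (Fin.last k)).det := by
    rw [det_apply, det_apply, finset_sum_coeff]
    refine Finset.sum_congr rfl fun g _ => ?_
    rw [coeff_smul]
    congr 1
    rw [mul_comm k n]
    have h := coeff_prod_of_natDegree_le (s := (Finset.univ : Finset (Fin n)))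
      (fun i => P (g i) i) k (fun i _ => hdeg _ _)
    rw [Finset.card_univ, Fintype.card_fin] at h
    rw [h]
    exact Finset.prod_congr rfl fun i _ => hcoeff _ _
  have hle : (det P).natDegree ≤ k * n := by
    rw [det_apply]
    refine natDegree_sum_le_of_forall_le _ _ fun g _ => ?_
    have h1 : natDegree (Equiv.Perm.sign g • ∏ i, P (g i) i) ≤
        natDegree (∏ i, P (g i) i) := by
      cases' Int.units_eq_one_or (Equiv.Perm.sign g) with sg sg
      · rw [sg, one_smul]
      · rw [sg, Units.neg_smul, one_smul, natDegree_neg]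
    refine h1.trans ((natDegree_prod_le _ _).trans ?_)
    calc ∑ i, natDegree (P (g i) i) ≤ ∑ _i : Fin n, k :=
          Finset.sum_le_sum fun i _ => hdeg _ _
      _ = k * n := by simp [Finset.sum_const, mul_comm]
  have hne : (det P).coeff (k * n) ≠ 0 := by
    rw [hD]
    exact (Matrix.isUnit_det_of_invertible _).ne_zero
  have hnd : (det P).natDegree = k * n := le_antisymm hle (le_natDegree_of_ne_zero hne)
  have hne0 : det P ≠ 0 := fun h => hne (by simp [h])
  constructor
  · rw [degree_eq_natDegree hne0, hnd]
  · rw [Polynomial.leadingCoeff, hnd, hD]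
end

section
/- Let A_0,…,A_k ∈ ℂ^{n×n} with A_k invertible and n ≥ 1, and consider P = Σ_{i=0}^{k} X^i • (A_i mapped entrywise into ℂ[X]). Then det(P) ∈ ℂ[X] is a nonzero polynomial whose multiset of roots (counted with multiplicity) has cardinality exactly k·n; in particular the matrix polynomial has exactly kn finite eigenvalues counted with multiplicity. -/
open Matrix Polynomial

lemma stmt15_entry {n k : ℕ} (A : Fin (k + 1) → Matrix (Fin n) (Fin n) ℂ) (i j : Fin n) :
    (∑ m : Fin (k + 1), (Polynomial.X : ℂ[X]) ^ (m : ℕ) • (A m).map Polynomial.C) i j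
      = ∑ m : Fin (k + 1), (Polynomial.X : ℂ[X]) ^ (m : ℕ) * Polynomial.C (A m i j) := by
  simp [Matrix.sum_apply]

lemma stmt15_entry_natDegree {n k : ℕ} (A : Fin (k + 1) → Matrix (Fin n) (Fin n) ℂ) (i j : Fin n) :
    ((∑ m : Fin (k + 1), (Polynomial.X : ℂ[X]) ^ (m : ℕ) • (A m).map Polynomial.C) i j).natDegree
      ≤ k := by
  rw [stmt15_entry]
  refine Polynomial.natDegree_sum_le_of_forall_le _ _ ?_
  intro m _
  refine (Polynomial.natDegree_mul_le).trans ?_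
  simp only [Polynomial.natDegree_X_pow, Polynomial.natDegree_C, add_zero]
  exact Nat.lt_succ_iff.mp m.isLt

lemma stmt15_entry_coeff {n k : ℕ} (A : Fin (k + 1) → Matrix (Fin n) (Fin n) ℂ) (i j : Fin n) :
    ((∑ m : Fin (k + 1), (Polynomial.X : ℂ[X]) ^ (m : ℕ) • (A m).map Polynomial.C) i j).coeff k
      = A (Fin.last k) i j := by
  rw [stmt15_entry, Polynomial.finset_sum_coeff]
  rw [Finset.sum_eq_single (Fin.last k)]
  · rw [mul_comm, Polynomial.coeff_C_mul, Polynomial.coeff_X_pow, Fin.val_last, if_pos rfl,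
      mul_one]
  · intro m _ hm
    have h : (m : ℕ) ≠ k := fun h => hm (Fin.ext (by simp [h]))
    rw [mul_comm, Polynomial.coeff_C_mul, Polynomial.coeff_X_pow, if_neg (Ne.symm h), mul_zero]
  · simp

lemma stmt15_natDegree_le {n k : ℕ} (A : Fin (k + 1) → Matrix (Fin n) (Fin n) ℂ) :
    (∑ m : Fin (k + 1), (Polynomial.X : ℂ[X]) ^ (m : ℕ) • (A m).map Polynomial.C).det.natDegree
      ≤ k * n := by
  rw [Matrix.det_apply]
  refine (Polynomial.natDegree_sum_le _ _).trans ?_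
  refine Multiset.max_le_of_forall_le _ _ ?_
  intro x hx
  simp only [Multiset.map_map, Multiset.mem_map, Function.comp_apply] at hx
  obtain ⟨g, -, rfl⟩ := hx
  calc
    _ ≤ (∏ i : Fin n,
        (∑ m : Fin (k + 1), (Polynomial.X : ℂ[X]) ^ (m : ℕ) • (A m).map Polynomial.C)
          (g i) i).natDegree := by
      rcases Int.units_eq_one_or (Equiv.Perm.sign g) with sg | sg
      · rw [sg, one_smul]
      · rw [sg, Units.neg_smul, one_smul, Polynomial.natDegree_neg]
    _ ≤ ∑ i : Fin n, ((∑ m : Fin (k + 1),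
        (Polynomial.X : ℂ[X]) ^ (m : ℕ) • (A m).map Polynomial.C) (g i) i).natDegree :=
      Polynomial.natDegree_prod_le _ _
    _ ≤ ∑ _i : Fin n, k := Finset.sum_le_sum fun i _ => stmt15_entry_natDegree A (g i) i
    _ = k * n := by simp [mul_comm]

lemma stmt15_coeff_det {n k : ℕ} (A : Fin (k + 1) → Matrix (Fin n) (Fin n) ℂ) :
    (∑ m : Fin (k + 1), (Polynomial.X : ℂ[X]) ^ (m : ℕ) • (A m).map Polynomial.C).det.coeff (k * n)
      = (A (Fin.last k)).det := by
  rw [Matrix.det_apply, Matrix.det_apply, Polynomial.finset_sum_coeff]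
  refine Finset.sum_congr rfl ?_
  intro g _
  rw [Polynomial.coeff_smul]
  congr 1
  have hcard : k * n = (Finset.univ : Finset (Fin n)).card * k := by
    simp [mul_comm]
  rw [hcard, Polynomial.coeff_prod_of_natDegree_le _ _ _
    (fun i _ => stmt15_entry_natDegree A (g i) i)]
  exact Finset.prod_congr rfl fun i _ => stmt15_entry_coeff A (g i) i

theorem stmt_15 (n k : ℕ) (hn : 1 ≤ n) (A : Fin (k + 1) → Matrix (Fin n) (Fin n) ℂ)
    (hAk : Invertible (A (Fin.last k))) :
    (∑ i : Fin (k + 1), (Polynomial.X : ℂ[X]) ^ (i : ℕ) • (A i).map Polynomial.C).det ≠ 0 ∧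
      (∑ i : Fin (k + 1),
        (Polynomial.X : ℂ[X]) ^ (i : ℕ) • (A i).map Polynomial.C).det.roots.card = k * n := by
  set p := (∑ i : Fin (k + 1), (Polynomial.X : ℂ[X]) ^ (i : ℕ) • (A i).map Polynomial.C).det
  have hdet : (A (Fin.last k)).det ≠ 0 :=
    (Matrix.isUnit_det_of_invertible _).ne_zero
  have hcoeff : p.coeff (k * n) = (A (Fin.last k)).det := stmt15_coeff_det A
  have hne : p ≠ 0 := fun h => hdet (by rw [← hcoeff, h, Polynomial.coeff_zero])
  have hdeg : p.natDegree = k * n :=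
    le_antisymm (stmt15_natDegree_le A)
      (Polynomial.le_natDegree_of_ne_zero (by rw [hcoeff]; exact hdet))
  refine ⟨hne, ?_⟩
  rw [← hdeg]
  exact (Polynomial.splits_iff_card_roots).mp (IsAlgClosed.splits p)
end
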